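/- For βa = Var(X)^{-1}Cov(X, Ua) (a = 0,1), Var(Ua - βaᵀX) = Var(Ua) - βaᵀVar(X)βa, and hence (1/(4π1))Var(U1-β1ᵀX) + (1/(4π0))Var(U0-β0ᵀX) + ¼(β1-β0)ᵀVar(X)(β1-β0) - [(1/(4π1))Var(U1) + (1/(4π0))Var(U0)] = -(1/(4π1))β1ᵀΣβ1 - (1/(4π0))β0ᵀΣβ0 + ¼(β1-β0)ᵀΣ(β1-β0), where Σ = Var(X), and this quantity equals -(1/(4π1π0))(π0β1+π1β0)ᵀΣ(π0β1+π1β0). -/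

import Mathlib

open MeasureTheory ProbabilityTheory Matrix

/-- Covariance of two real random variables. -/
noncomputable def cov {Ω : Type*} [MeasurableSpace Ω] (μ : Measure Ω) (f g : Ω → ℝ) : ℝ :=
  (∫ ω, f ω * g ω ∂μ) - (∫ ω, f ω ∂μ) * ∫ ω, g ω ∂μ

lemma int_mul {Ω : Type*} [MeasurableSpace Ω] {μ : Measure Ω} {f g : Ω → ℝ}
    (hf : MemLp f 2 μ) (hg : MemLp g 2 μ) : Integrable (fun ω => f ω * g ω) μ := by
  have h : MemLp (f • g) 1 μ := hg.smul hf
  exact memLp_one_iff_integrable.mp h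

lemma var_key {Ω : Type*} [MeasurableSpace Ω] (μ : Measure Ω) [IsProbabilityMeasure μ]
    {p : ℕ} (X : Ω → Fin p → ℝ) (U : Ω → ℝ)
    (hX : ∀ i, MemLp (fun ω => X ω i) 2 μ) (hU : MemLp U 2 μ) (β : Fin p → ℝ) :
    variance (fun ω => U ω - ∑ i, β i * X ω i) μ
      = variance U μ - 2 * ∑ i, β i * cov μ (fun ω => X ω i) U
        + ∑ i, ∑ j, β i * β j * cov μ (fun ω => X ω i) (fun ω => X ω j) := by
  have hS : MemLp (fun ω => ∑ i, β i * X ω i) 2 μ := by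
    have := memLp_finset_sum' (μ := μ) (p := 2) Finset.univ
      (f := fun (i : Fin p) (ω : Ω) => β i * X ω i) (fun i _ => (hX i).const_mul (β i))
    convert this using 1
    ext ω
    simp
  have hsub : MemLp (fun ω => U ω - ∑ i, β i * X ω i) 2 μ := hU.sub hS
  have hV := variance_eq_sub hsub
  have hVU := variance_eq_sub hU
  have hintX : ∀ i, Integrable (fun ω => X ω i) μ := fun i => (hX i).integrable (by norm_num)
  have hintS : (∫ ω, ∑ i, β i * X ω i ∂μ) = ∑ i, β i * ∫ ω, X ω i ∂μ := by
    rw [integral_finset_sum _ (fun i _ => ((hintX i).const_mul (β i)))]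
    simp [integral_const_mul]
  have h1 : Integrable (fun ω => U ω * U ω) μ := int_mul hU hU
  have h2 : Integrable (fun ω => U ω * ∑ i, β i * X ω i) μ := int_mul hU hS
  have h3 : Integrable (fun ω => (∑ i, β i * X ω i) * (∑ j, β j * X ω j)) μ := int_mul hS hS
  have hintUS : (∫ ω, U ω * ∑ i, β i * X ω i ∂μ) = ∑ i, β i * ∫ ω, X ω i * U ω ∂μ := by
    have e : ∀ ω, U ω * ∑ i, β i * X ω i = ∑ i, β i * (X ω i * U ω) := by
      intro ω; rw [Finset.mul_sum]; exact Finset.sum_congr rfl fun i _ => by ring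
    simp_rw [e]
    rw [integral_finset_sum _ (fun i _ => ((int_mul (hX i) hU).const_mul (β i)))]
    exact Finset.sum_congr rfl fun i _ => integral_const_mul _ _
  have hintSS : (∫ ω, (∑ i, β i * X ω i) * (∑ j, β j * X ω j) ∂μ)
      = ∑ i, ∑ j, β i * β j * ∫ ω, X ω i * X ω j ∂μ := by
    have e : ∀ ω, (∑ i, β i * X ω i) * (∑ j, β j * X ω j)
        = ∑ i, ∑ j, β i * β j * (X ω i * X ω j) := by
      intro ω; rw [Finset.sum_mul_sum]
      exact Finset.sum_congr rfl fun i _ => Finset.sum_congr rfl fun j _ => by ring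
    simp_rw [e]
    rw [integral_finset_sum _ (fun i _ =>
      integrable_finset_sum _ (fun j _ => (int_mul (hX i) (hX j)).const_mul _))]
    refine Finset.sum_congr rfl fun i _ => ?_
    rw [integral_finset_sum _ (fun j _ => (int_mul (hX i) (hX j)).const_mul _)]
    exact Finset.sum_congr rfl fun j _ => integral_const_mul _ _
  have hsq : (∫ ω, (U ω - ∑ i, β i * X ω i) ^ 2 ∂μ)
      = (∫ ω, U ω * U ω ∂μ) - 2 * (∫ ω, U ω * ∑ i, β i * X ω i ∂μ)
        + ∫ ω, (∑ i, β i * X ω i) * (∑ j, β j * X ω j) ∂μ := by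
    have e : ∀ ω, (U ω - ∑ i, β i * X ω i) ^ 2
        = U ω * U ω - 2 * (U ω * ∑ i, β i * X ω i)
          + (∑ i, β i * X ω i) * (∑ j, β j * X ω j) := fun ω => by ring
    simp_rw [e]
    have h12 : Integrable (fun ω => U ω * U ω - 2 * (U ω * ∑ i, β i * X ω i)) μ :=
      h1.sub (h2.const_mul 2)
    rw [integral_add h12 h3, integral_sub h1 (h2.const_mul 2), integral_const_mul]
  have hmean : (∫ ω, (U ω - ∑ i, β i * X ω i) ∂μ)
      = (∫ ω, U ω ∂μ) - ∑ i, β i * ∫ ω, X ω i ∂μ := by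
    rw [integral_sub (hU.integrable (by norm_num)) (hS.integrable (by norm_num)), hintS]
  have e2 : ∑ i, β i * cov μ (fun ω => X ω i) U
      = (∑ i, β i * ∫ ω, X ω i * U ω ∂μ) - (∑ i, β i * ∫ ω, X ω i ∂μ) * ∫ ω, U ω ∂μ := by
    simp only [cov, mul_sub]
    rw [Finset.sum_sub_distrib, Finset.sum_mul]
    congr 1
    exact Finset.sum_congr rfl fun i _ => by ring
  have e3 : ∑ i, ∑ j, β i * β j * cov μ (fun ω => X ω i) (fun ω => X ω j)
      = (∑ i, ∑ j, β i * β j * ∫ ω, X ω i * X ω j ∂μ)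
        - (∑ i, β i * ∫ ω, X ω i ∂μ) * (∑ j, β j * ∫ ω, X ω j ∂μ) := by
    have e : ∀ i j : Fin p, β i * β j * cov μ (fun ω => X ω i) (fun ω => X ω j)
        = β i * β j * (∫ ω, X ω i * X ω j ∂μ)
          - (β i * ∫ ω, X ω i ∂μ) * (β j * ∫ ω, X ω j ∂μ) := by
      intro i j; simp only [cov]; ring
    simp_rw [e, Finset.sum_sub_distrib, Finset.sum_mul_sum]
  have hVfun : variance (fun ω => U ω - ∑ i, β i * X ω i) μ
      = (∫ ω, (U ω - ∑ i, β i * X ω i) ^ 2 ∂μ)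
        - (∫ ω, (U ω - ∑ i, β i * X ω i) ∂μ) ^ 2 := by simpa using hV
  have hVUfun : variance U μ = (∫ ω, U ω * U ω ∂μ) - (∫ ω, U ω ∂μ) ^ 2 := by
    simpa [pow_two] using hVU
  rw [hVfun, hVUfun, hsq, hmean, hintUS, hintSS, e2, e3]
  ring

/-- For βa = Var(X)⁻¹Cov(X,Ua), Var(Ua - βaᵀX) = Var(Ua) - βaᵀΣβa,
and the adjusted-minus-unadjusted variance difference equals
-(1/(4π1))β1ᵀΣβ1 - (1/(4π0))β0ᵀΣβ0 + ¼(β1-β0)ᵀΣ(β1-β0)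
= -(1/(4π1π0))(π0β1+π1β0)ᵀΣ(π0β1+π1β0). -/
theorem stmt_14 {Ω : Type*} [MeasurableSpace Ω] (μ : Measure Ω) [IsProbabilityMeasure μ]
    {p : ℕ} (X : Ω → Fin p → ℝ) (U0 U1 : Ω → ℝ)
    (hX : ∀ i, MemLp (fun ω => X ω i) 2 μ)
    (hU0 : MemLp U0 2 μ) (hU1 : MemLp U1 2 μ)
    (π1 : ℝ) (hπ1 : π1 ∈ Set.Ioo (0 : ℝ) 1) (π0 : ℝ) (hπ0 : π0 = 1 - π1)
    (Sm : Matrix (Fin p) (Fin p) ℝ)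
    (hSm : Sm = Matrix.of fun i j => cov μ (fun ω => X ω i) (fun ω => X ω j))
    (hpd : Sm.PosDef)
    (β0 β1 : Fin p → ℝ)
    (hβ0 : β0 = Sm⁻¹.mulVec fun i => cov μ (fun ω => X ω i) U0)
    (hβ1 : β1 = Sm⁻¹.mulVec fun i => cov μ (fun ω => X ω i) U1) :
    variance (fun ω => U0 ω - ∑ i, β0 i * X ω i) μ
        = variance U0 μ - β0 ⬝ᵥ Sm.mulVec β0
    ∧ variance (fun ω => U1 ω - ∑ i, β1 i * X ω i) μ
        = variance U1 μ - β1 ⬝ᵥ Sm.mulVec β1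
    ∧ (1 / (4 * π1)) * variance (fun ω => U1 ω - ∑ i, β1 i * X ω i) μ
        + (1 / (4 * π0)) * variance (fun ω => U0 ω - ∑ i, β0 i * X ω i) μ
        + (1 / 4) * ((β1 - β0) ⬝ᵥ Sm.mulVec (β1 - β0))
        - ((1 / (4 * π1)) * variance U1 μ + (1 / (4 * π0)) * variance U0 μ)
      = -(1 / (4 * π1)) * (β1 ⬝ᵥ Sm.mulVec β1) - (1 / (4 * π0)) * (β0 ⬝ᵥ Sm.mulVec β0)
          + (1 / 4) * ((β1 - β0) ⬝ᵥ Sm.mulVec (β1 - β0))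
    ∧ -(1 / (4 * π1)) * (β1 ⬝ᵥ Sm.mulVec β1) - (1 / (4 * π0)) * (β0 ⬝ᵥ Sm.mulVec β0)
          + (1 / 4) * ((β1 - β0) ⬝ᵥ Sm.mulVec (β1 - β0))
      = -(1 / (4 * π1 * π0)) * ((π0 • β1 + π1 • β0) ⬝ᵥ Sm.mulVec (π0 • β1 + π1 • β0)) := by
  have hdet : IsUnit Sm.det := isUnit_iff_ne_zero.mpr hpd.det_pos.ne'
  have hmul : ∀ c : Fin p → ℝ, Sm.mulVec (Sm⁻¹.mulVec c) = c := by
    intro c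
    rw [Matrix.mulVec_mulVec, Matrix.mul_nonsing_inv _ hdet, Matrix.one_mulVec]
  have hc0 : Sm.mulVec β0 = fun i => cov μ (fun ω => X ω i) U0 := by rw [hβ0, hmul]
  have hc1 : Sm.mulVec β1 = fun i => cov μ (fun ω => X ω i) U1 := by rw [hβ1, hmul]
  have hB : ∀ γ : Fin p → ℝ,
      ∑ i, ∑ j, γ i * γ j * cov μ (fun ω => X ω i) (fun ω => X ω j)
        = γ ⬝ᵥ Sm.mulVec γ := by
    intro γ
    simp only [dotProduct, Matrix.mulVec, hSm, Matrix.of_apply,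
      Finset.mul_sum]
    exact Finset.sum_congr rfl fun i _ => Finset.sum_congr rfl fun j _ => by ring
  have hA0 : ∑ i, β0 i * cov μ (fun ω => X ω i) U0 = β0 ⬝ᵥ Sm.mulVec β0 := by
    rw [hc0]; rfl
  have hA1 : ∑ i, β1 i * cov μ (fun ω => X ω i) U1 = β1 ⬝ᵥ Sm.mulVec β1 := by
    rw [hc1]; rfl
  have part0 : variance (fun ω => U0 ω - ∑ i, β0 i * X ω i) μ
      = variance U0 μ - β0 ⬝ᵥ Sm.mulVec β0 := by
    rw [var_key μ X U0 hX hU0 β0, hA0, hB β0]; ring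
  have part1 : variance (fun ω => U1 ω - ∑ i, β1 i * X ω i) μ
      = variance U1 μ - β1 ⬝ᵥ Sm.mulVec β1 := by
    rw [var_key μ X U1 hX hU1 β1, hA1, hB β1]; ring
  refine ⟨part0, part1, by rw [part0, part1]; ring, ?_⟩
  have hπ1ne : π1 ≠ 0 := hπ1.1.ne'
  have hπ0ne : π0 ≠ 0 := by rw [hπ0]; linarith [hπ1.2]
  simp only [Matrix.mulVec_sub, Matrix.mulVec_add, Matrix.mulVec_smul, sub_dotProduct,
    dotProduct_sub, add_dotProduct, dotProduct_add, smul_dotProduct, dotProduct_smul,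
    smul_eq_mul]
  subst hπ0
  field_simp
  ring
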